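/- Let M be a finitely generated torsion module over the PID Λ = ℂ[t,t⁻¹]. Then Ext^1_Λ(M, Λ) is a torsion Λ-module, and the characteristic polynomial of the action of t on Ext^1_Λ(M, Λ) equals the characteristic polynomial of the action of t on M. -/

import Mathlib

open LaurentPolynomial

noncomputable section

/-- The `ℂ`-module structure on a `ℂ[t,t⁻¹]`-module obtained by restriction of scalars. -/
abbrev cMod (N : Type*) [AddCommGroup N] [Module (LaurentPolynomial ℂ) N] : Module ℂ N :=
  Module.compHom N (algebraMap ℂ (LaurentPolynomial ℂ))

/-- The action of `t` on a `ℂ[t,t⁻¹]`-module, as a `ℂ`-linear endomorphism. -/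
def tauT (N : Type*) [AddCommGroup N] [Module (LaurentPolynomial ℂ) N] :
    @LinearMap ℂ ℂ _ _ (RingHom.id ℂ) N N _ _ (cMod N) (cMod N) := by
  letI := cMod N
  exact
  { toFun := fun x => (T 1 : LaurentPolynomial ℂ) • x
    map_add' := fun a b => smul_add _ a b
    map_smul' := fun c x => by
      show (T 1 : LaurentPolynomial ℂ) • ((algebraMap ℂ (LaurentPolynomial ℂ) c) • x)
        = (algebraMap ℂ (LaurentPolynomial ℂ) c) • ((T 1 : LaurentPolynomial ℂ) • x)
      rw [← mul_smul, ← mul_smul, mul_comm] }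

/-- The characteristic polynomial of the action of `t` on a `ℂ[t,t⁻¹]`-module which is
finite-dimensional over `ℂ` (junk value `1` otherwise). -/
def tCharpoly (N : Type*) [AddCommGroup N] [Module (LaurentPolynomial ℂ) N] :
    Polynomial ℂ := by
  classical
  letI := cMod N
  exact if h : Module.Finite ℂ N then letI := h; LinearMap.charpoly (tauT N) else 1

set_option maxHeartbeats 1000000

-- auxiliary
local notation "Λ" => LaurentPolynomial ℂ

instance : IsDomain Λ := NoZeroDivisors.to_isDomain _

instance : IsPrincipalIdealRing Λ := by
  haveI := LaurentPolynomial.isLocalization (R := ℂ)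
  constructor
  intro I
  have h1 : Ideal.map (algebraMap (Polynomial ℂ) Λ) (Ideal.comap (algebraMap (Polynomial ℂ) Λ) I) = I :=
    IsLocalization.map_comap (Submonoid.powers (Polynomial.X)) _ I
  obtain ⟨a, ha⟩ := (IsPrincipalIdealRing.principal (Ideal.comap (algebraMap (Polynomial ℂ) Λ) I))
  refine ⟨⟨algebraMap (Polynomial ℂ) Λ a, ?_⟩⟩
  rw [← h1, ha]
  show Ideal.map _ (Ideal.span {a}) = Ideal.span _
  rw [Ideal.map_span, Set.image_singleton]

theorem isTorsion_of_equiv {A B : Type*} [AddCommGroup A] [Module Λ A] [AddCommGroup B] [Module Λ B]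
    (e : A ≃ₗ[Λ] B) (h : Module.IsTorsion Λ B) : Module.IsTorsion Λ A := by
  intro a
  obtain ⟨r, hr⟩ := @h (e a)
  refine ⟨r, e.injective ?_⟩
  rw [Submonoid.smul_def] at hr ⊢
  rw [map_smul, hr, map_zero]

theorem tCharpoly_congr {N N' : Type*} [AddCommGroup N] [Module Λ N] [AddCommGroup N'] [Module Λ N']
    (e : N ≃ₗ[Λ] N') : tCharpoly N = tCharpoly N' := by
  classical
  letI := cMod N; letI := cMod N'
  let e' : @LinearEquiv ℂ ℂ _ _ (RingHom.id ℂ) (RingHom.id ℂ) _ _ N N' _ _ (cMod N) (cMod N') :=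
    { toFun := e, invFun := e.symm, map_add' := e.map_add,
      map_smul' := fun c x => e.map_smul (algebraMap ℂ Λ c) x,
      left_inv := e.left_inv, right_inv := e.right_inv }
  by_cases h : Module.Finite ℂ N
  · haveI := h
    haveI h' : Module.Finite ℂ N' := Module.Finite.equiv e'
    rw [tCharpoly, tCharpoly, dif_pos h, dif_pos h']
    have : tauT N' = e'.conj (tauT N) := by
      ext x
      show (T 1 : Λ) • x = e ((T 1 : Λ) • e.symm x)
      rw [map_smul, e.apply_symm_apply]
    rw [this, LinearEquiv.charpoly_conj]
  · have h' : ¬ Module.Finite ℂ N' := fun h' => h (Module.Finite.equiv e'.symm)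
    rw [tCharpoly, tCharpoly, dif_neg h, dif_neg h']


/-- For a finitely generated torsion module `M` over the PID `Λ = ℂ[t,t⁻¹]`, the module
`Ext¹_Λ(M, Λ)` — computed from any finite free resolution `0 → F1 →d F0 → M → 0` as the
cokernel of the dual map `d* : Hom(F0, Λ) → Hom(F1, Λ)` — is a torsion `Λ`-module, and
the characteristic polynomial of the action of `t` on it equals the characteristic
polynomial of the action of `t` on `M`. -/
theorem ext_one_torsion_and_charpoly
    (M : Type) [AddCommGroup M] [Module (LaurentPolynomial ℂ) M]
    [Module.Finite (LaurentPolynomial ℂ) M]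
    (htors : Module.IsTorsion (LaurentPolynomial ℂ) M)
    (F0 F1 : Type) [AddCommGroup F0] [Module (LaurentPolynomial ℂ) F0]
    [AddCommGroup F1] [Module (LaurentPolynomial ℂ) F1]
    [Module.Free (LaurentPolynomial ℂ) F0] [Module.Finite (LaurentPolynomial ℂ) F0]
    [Module.Free (LaurentPolynomial ℂ) F1] [Module.Finite (LaurentPolynomial ℂ) F1]
    (d : F1 →ₗ[LaurentPolynomial ℂ] F0) (π : F0 →ₗ[LaurentPolynomial ℂ] M)
    (hd : Function.Injective d) (hπ : Function.Surjective π)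
    (hex : Function.Exact d π) :
    Module.IsTorsion (LaurentPolynomial ℂ)
      ((F1 →ₗ[LaurentPolynomial ℂ] LaurentPolynomial ℂ) ⧸
        LinearMap.range (LinearMap.lcomp (LaurentPolynomial ℂ) (LaurentPolynomial ℂ) d)) ∧
    tCharpoly
      ((F1 →ₗ[LaurentPolynomial ℂ] LaurentPolynomial ℂ) ⧸
        LinearMap.range (LinearMap.lcomp (LaurentPolynomial ℂ) (LaurentPolynomial ℂ) d)) =
      tCharpoly M := by
  classical
  -- setup
  set N : Submodule Λ F0 := LinearMap.range d with hN
  let bF0 : Module.Basis (Module.Free.ChooseBasisIndex Λ F0) Λ F0 := Module.Free.chooseBasis Λ F0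
  obtain ⟨n, snf⟩ := N.smithNormalForm bF0
  set ι := Module.Free.ChooseBasisIndex Λ F0
  set bM := snf.bM with hbM
  -- F0 ⧸ N ≃ M
  have hker : LinearMap.ker π = N := LinearMap.exact_iff.mp hex
  let equivQuot : (F0 ⧸ N) ≃ₗ[Λ] M :=
    (Submodule.quotEquivOfEq N (LinearMap.ker π) hker.symm).trans
      (π.quotKerEquivOfSurjective hπ)
  have hqtors : Module.IsTorsion Λ (F0 ⧸ N) := isTorsion_of_equiv equivQuot htors
  -- f is surjective
  have hsurj : Function.Surjective snf.f := by
    intro i0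
    by_contra hi0
    have hnr : i0 ∉ Set.range snf.f := by simpa using hi0
    have hker' : N ≤ LinearMap.ker (bM.coord i0) := snf.le_ker_coord_of_notMem_range hnr
    obtain ⟨r, hr⟩ := @hqtors (Submodule.Quotient.mk (bM i0))
    rw [Submonoid.smul_def, ← Submodule.Quotient.mk_smul, Submodule.Quotient.mk_eq_zero] at hr
    have := hker' hr
    rw [LinearMap.mem_ker, map_smul, Module.Basis.coord_apply, Module.Basis.repr_self] at this
    simp only [Finsupp.single_eq_same, smul_eq_mul, mul_one] at this
    exact nonZeroDivisors.coe_ne_zero r this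
  let eFin : Fin n ≃ ι := Equiv.ofBijective snf.f ⟨snf.f.injective, hsurj⟩
  -- basis of F1
  let gN : ↥N ≃ₗ[Λ] F1 := (LinearEquiv.ofInjective d hd).symm
  let b1 : Module.Basis (Fin n) Λ F1 := snf.bN.map gN
  have hd1 : ∀ j, d (b1 j) = snf.a j • bM (snf.f j) := by
    intro j
    have : d (b1 j) = ((LinearEquiv.ofInjective d hd) (b1 j) : F0) := by
      simp [LinearEquiv.ofInjective_apply]
    rw [this]
    show (((LinearEquiv.ofInjective d hd) (gN (snf.bN j)) : F0)) = _
    rw [show (LinearEquiv.ofInjective d hd) (gN (snf.bN j)) = snf.bN j from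
      (LinearEquiv.ofInjective d hd).apply_symm_apply _]
    exact snf.snf j
  -- the middle map ψ
  let ψ : (ι → Λ) →ₗ[Λ] (Fin n → Λ) :=
    { toFun := fun g j => snf.a j * g (snf.f j)
      map_add' := by intro g h; funext j; simp [mul_add]
      map_smul' := by intro c g; funext j; simp; ring }
  -- dual side
  let E1 : (F1 →ₗ[Λ] Λ) ≃ₗ[Λ] (Fin n → Λ) := b1.dualBasis.equivFun
  let E0 : (F0 →ₗ[Λ] Λ) ≃ₗ[Λ] (ι → Λ) := bM.dualBasis.equivFun
  have hcomm1 : E1.toLinearMap ∘ₗ LinearMap.lcomp Λ Λ d = ψ ∘ₗ E0.toLinearMap := by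
    apply LinearMap.ext
    intro φ
    funext j
    simp only [E1, E0, ψ, LinearMap.coe_comp, Function.comp_apply, LinearMap.lcomp_apply,
      LinearEquiv.coe_coe, Module.Basis.equivFun_apply, Module.Basis.dualBasis_repr, LinearMap.coe_mk,
      AddHom.coe_mk]
    rw [hd1 j, map_smul, smul_eq_mul]
  have hmap1' : Submodule.map E1.toLinearMap (LinearMap.range (LinearMap.lcomp Λ Λ d)) =
      LinearMap.range ψ := by
    rw [← LinearMap.range_comp, hcomm1, LinearMap.range_comp, LinearEquiv.range, Submodule.map_top]
  have hmap1 : Submodule.map E1.toLinearMap (LinearMap.range (LinearMap.lcomp Λ Λ d)) = LinearMap.range ψ :=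
    hmap1'
  -- primal side
  let EM : F0 ≃ₗ[Λ] (ι → Λ) := bM.equivFun
  let ρ : (ι → Λ) ≃ₗ[Λ] (Fin n → Λ) := LinearEquiv.funCongrLeft Λ Λ eFin
  let σ : F1 ≃ₗ[Λ] (ι → Λ) := b1.equivFun.trans ρ.symm
  have hcomm2 : (EM.trans ρ).toLinearMap ∘ₗ d = ψ ∘ₗ σ.toLinearMap := by
    apply LinearMap.ext
    intro x
    funext j
    show ρ (EM (d x)) j = snf.a j * (σ x) (snf.f j)
    have hρ : ρ (EM (d x)) j = EM (d x) (eFin j) := rfl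
    rw [hρ]
    have hσ : (σ x) (snf.f j) = b1.repr x j := by
      show (ρ.symm (b1.equivFun x)) (snf.f j) = _
      have : ρ.symm (b1.equivFun x) = (b1.equivFun x) ∘ eFin.symm := rfl
      rw [this]
      simp only [Function.comp_apply, Module.Basis.equivFun_apply]
      congr 1
      exact eFin.symm_apply_apply j
    rw [hσ]
    show bM.repr (d x) (snf.f j) = _
    have hmem : d x ∈ N := LinearMap.mem_range_self d x
    have := snf.repr_apply_embedding_eq_repr_smul (⟨d x, hmem⟩ : N) (i := j)
    rw [this, map_smul]
    simp only [Finsupp.smul_apply, smul_eq_mul]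
    congr 1
  have hmap2' : Submodule.map (EM.trans ρ).toLinearMap N = LinearMap.range ψ := by
    rw [hN, ← LinearMap.range_comp, hcomm2, LinearMap.range_comp, LinearEquiv.range,
      Submodule.map_top]
  have hmap2 : Submodule.map (EM.trans ρ).toLinearMap N = LinearMap.range ψ := hmap2'
  -- assemble
  let iso1 : ((F1 →ₗ[Λ] Λ) ⧸ LinearMap.range (LinearMap.lcomp Λ Λ d)) ≃ₗ[Λ]
      ((Fin n → Λ) ⧸ LinearMap.range ψ) :=
    Submodule.Quotient.equiv _ _ E1 hmap1
  let iso2 : (F0 ⧸ N) ≃ₗ[Λ] ((Fin n → Λ) ⧸ LinearMap.range ψ) :=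
    Submodule.Quotient.equiv _ _ (EM.trans ρ) hmap2
  let iso : ((F1 →ₗ[Λ] Λ) ⧸ LinearMap.range (LinearMap.lcomp Λ Λ d)) ≃ₗ[Λ] M :=
    (iso1.trans iso2.symm).trans equivQuot
  exact ⟨isTorsion_of_equiv iso htors, tCharpoly_congr iso⟩

end
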